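/- The range of the tree-code map τ is exactly the set of almost even strings: a binary string x is almost even if and only if x = t^τ for some (unique) variable-free tree term t. -/

import Mathlib

inductive Letter : Type
  | a | b
deriving DecidableEq

open Letter

def alpha (x : List Letter) : ℕ := x.count Letter.a
def beta (x : List Letter) : ℕ := x.count Letter.b

/-- x is "almost even": nonempty, α(x) = β(x)+1, and every proper prefix u has α(u) ≤ β(u). -/
def AE (x : List Letter) : Prop :=
  x ≠ [] ∧ alpha x = beta x + 1 ∧ ∀ u : List Letter, u <+: x → u ≠ x → alpha u ≤ beta u

inductive Tr : Type
  | zero | pair (u v : Tr)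
deriving DecidableEq

def code : Tr → List Letter
  | Tr.zero => [Letter.a]
  | Tr.pair u v => Letter.b :: (code u ++ code v)

inductive Subt : Tr → Tr → Prop
  | refl (t : Tr) : Subt t t
  | left {s u v : Tr} : Subt s u → Subt s (Tr.pair u v)
  | right {s u v : Tr} : Subt s v → Subt s (Tr.pair u v)

lemma alpha_append (x y : List Letter) : alpha (x ++ y) = alpha x + alpha y :=
  List.count_append

lemma beta_append (x y : List Letter) : beta (x ++ y) = beta x + beta y :=
  List.count_append

lemma alpha_cons_b (x : List Letter) : alpha (Letter.b :: x) = alpha x := by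
  simp [alpha, List.count_cons]

lemma beta_cons_b (x : List Letter) : beta (Letter.b :: x) = beta x + 1 := by
  simp [beta, List.count_cons]

lemma alpha_cons_a (x : List Letter) : alpha (Letter.a :: x) = alpha x + 1 := by
  simp [alpha, List.count_cons]

lemma beta_cons_a (x : List Letter) : beta (Letter.a :: x) = beta x := by
  simp [beta, List.count_cons]

lemma alpha_code (t : Tr) : alpha (code t) = beta (code t) + 1 := by
  induction t with
  | zero => simp [code, alpha, beta]
  | pair u v ihu ihv =>
    simp only [code, alpha_cons_b, beta_cons_b, alpha_append, beta_append, ihu, ihv]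
    ring

lemma prefix_append_cases {w x y : List Letter} (h : w <+: x ++ y) :
    w <+: x ∨ ∃ w', w = x ++ w' ∧ w' <+: y := by
  rcases le_or_gt w.length x.length with hle | hlt
  · exact Or.inl (List.prefix_of_prefix_length_le h (x.prefix_append y) hle)
  · have hx : x <+: w :=
      List.prefix_of_prefix_length_le (x.prefix_append y) h hlt.le
    rcases hx with ⟨w', rfl⟩
    exact Or.inr ⟨w', rfl, (List.prefix_append_right_inj x).mp h⟩

lemma AE_code (t : Tr) : AE (code t) := by
  induction t with
  | zero =>
    refine ⟨by simp [code], by simp [code, alpha, beta], ?_⟩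
    intro u hu hne
    rcases u with _ | ⟨c, w⟩
    · simp [alpha, beta]
    · rw [code, List.cons_prefix_cons] at hu
      rcases hu with ⟨rfl, hw⟩
      simp at hw
      exact absurd (by rw [hw]; rfl) hne
  | pair s v ihs ihv =>
    refine ⟨by simp [code], ?_, ?_⟩
    · simp only [code, alpha_cons_b, beta_cons_b, alpha_append, beta_append, alpha_code]
      ring
    · intro u hu hne
      rcases u with _ | ⟨c, w⟩
      · simp [alpha, beta]
      · rw [code, List.cons_prefix_cons] at hu
        rcases hu with ⟨rfl, hw⟩
        rw [alpha_cons_b, beta_cons_b]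
        -- suffices alpha w ≤ beta w + 1
        rcases prefix_append_cases hw with hws | ⟨w', rfl, hwv⟩
        · rcases eq_or_ne w (code s) with rfl | hne'
          · rw [alpha_code]
          · exact le_trans (ihs.2.2 w hws hne') (Nat.le_succ _)
        · have hne'' : w' ≠ code v := by
            rintro rfl; exact hne (by rw [code])
          have := ihv.2.2 w' hwv hne''
          rw [alpha_append, beta_append, alpha_code s]
          omega

lemma code_ne_nil (t : Tr) : code t ≠ [] := by
  cases t <;> simp [code]

lemma AE_prefix_eq {x y : List Letter} (hx : AE x) (hy : AE y) (h : x <+: y) : x = y := by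
  by_contra hne
  have h1 := hy.2.2 x h hne
  have h2 := hx.2.1
  omega

lemma code_inj : ∀ {s t : Tr}, code s = code t → s = t := by
  intro s
  induction s with
  | zero => intro t h; cases t with
    | zero => rfl
    | pair u v => simp [code] at h
  | pair u v ihu ihv =>
    intro t h
    cases t with
    | zero => simp [code] at h
    | pair u' v' =>
      rw [code, code, List.cons.injEq] at h
      have h2 := h.2
      have hcu : code u = code u' := by
        rcases le_or_gt (code u).length (code u').length with hle | hlt
        · exact AE_prefix_eq (AE_code u) (AE_code u')
            (List.prefix_of_prefix_length_le ⟨code v, h2⟩ (List.prefix_append _ _) hle)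
        · exact (AE_prefix_eq (AE_code u') (AE_code u)
            (List.prefix_of_prefix_length_le ⟨code v', h2.symm⟩ (List.prefix_append _ _) hlt.le)).symm
      rw [hcu] at h2
      have hcv : code v = code v' := List.append_cancel_left h2
      rw [ihu hcu, ihv hcv]

lemma exists_code : ∀ n (x : List Letter), x.length ≤ n → AE x → ∃ t, code t = x := by
  intro n
  induction n with
  | zero =>
    intro x hlen hx
    exact absurd (List.length_eq_zero_iff.mp (Nat.le_zero.mp hlen)) hx.1
  | succ n ih =>
    intro x hlen hx
    rcases x with _ | ⟨c, y⟩
    · exact absurd rfl hx.1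
    cases c with
    | a =>
      rcases y with _ | ⟨d, y'⟩
      · exact ⟨Tr.zero, rfl⟩
      · have := hx.2.2 [Letter.a] ⟨d :: y', rfl⟩ (by simp)
        simp [alpha, beta] at this
    | b =>
      have hy : alpha y = beta y + 2 := by
        have := hx.2.1
        rw [alpha_cons_b, beta_cons_b] at this
        omega
      have hpre : ∀ u : List Letter, u <+: y → u ≠ y → alpha u ≤ beta u + 1 := by
        intro u hu hne
        have := hx.2.2 (Letter.b :: u) (List.cons_prefix_cons.mpr ⟨rfl, hu⟩)
          (by simpa using hne)
        rw [alpha_cons_b, beta_cons_b] at this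
        exact this
      -- find least n₀ with alpha (take n₀) > beta (take n₀)
      have hex : ∃ m, beta (y.take m) + 1 ≤ alpha (y.take m) :=
        ⟨y.length, by rw [List.take_length]; omega⟩
      classical
      obtain ⟨n₀, hfind, hmin⟩ :
          ∃ m, (beta (y.take m) + 1 ≤ alpha (y.take m)) ∧
            ∀ k, k < m → alpha (y.take k) ≤ beta (y.take k) :=
        ⟨Nat.find hex, Nat.find_spec hex, fun k hk => by
          have := Nat.find_min hex hk; omega⟩
      have hn₀pos : 0 < n₀ := by
        rcases Nat.eq_zero_or_pos n₀ with rfl | h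
        · simp [alpha, beta] at hfind
        · exact h
      have hn₀le : n₀ ≤ y.length := by
        by_contra hgt
        push_neg at hgt
        have := hmin y.length hgt
        rw [List.take_length] at this
        omega
      -- alpha (take n₀) = beta (take n₀) + 1
      have hstep : alpha (y.take n₀) = beta (y.take n₀) + 1 := by
        obtain ⟨m, rfl⟩ : ∃ m, n₀ = m + 1 := ⟨n₀ - 1, by omega⟩
        have hm := hmin m (Nat.lt_succ_self m)
        have hmlt : m < y.length := by omega
        have htake : y.take (m + 1) = y.take m ++ [y.get ⟨m, hmlt⟩] := by
          rw [List.take_succ, List.getElem?_eq_getElem hmlt]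
          rfl
        have hsingle : alpha [y.get ⟨m, hmlt⟩] + beta [y.get ⟨m, hmlt⟩] = 1 := by
          cases y.get ⟨m, hmlt⟩ <;> simp [alpha, beta]
        rw [htake] at hfind ⊢
        rw [alpha_append, beta_append] at hfind ⊢
        omega
      set y1 := y.take n₀ with hy1
      set y2 := y.drop n₀ with hy2
      have hsplit : y1 ++ y2 = y := List.take_append_drop _ _
      have hy1len : y1.length = n₀ := by
        rw [hy1, List.length_take]; omega
      have hAE1 : AE y1 := by
        refine ⟨?_, hstep, ?_⟩
        · intro h
          rw [h] at hy1len
          simp at hy1len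
          omega
        · intro u hu hne
          have hulen : u.length < n₀ := by
            have := hu.length_le
            rw [hy1len] at this
            rcases lt_or_eq_of_le this with h | h
            · exact h
            · exact absurd (hu.eq_of_length_le (by rw [hy1len, h])) hne
          have hutake : u = y.take u.length := by
            conv_lhs => rw [List.prefix_iff_eq_take.mp hu]
            rw [hy1, List.take_take, min_eq_left hulen.le]
          have := hmin u.length hulen
          rwa [← hutake] at this
      have hy2alpha : alpha y2 = beta y2 + 1 := by
        have h1 : alpha y1 + alpha y2 = alpha y := by rw [← alpha_append, hsplit]
        have h2 : beta y1 + beta y2 = beta y := by rw [← beta_append, hsplit]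
        omega
      have hAE2 : AE y2 := by
        refine ⟨?_, hy2alpha, ?_⟩
        · intro h
          rw [h] at hy2alpha
          simp [alpha, beta] at hy2alpha
        · intro u hu hne
          have hpy : y1 ++ u <+: y := by
            rw [← hsplit]
            exact (List.prefix_append_right_inj y1).mpr hu
          have hney : y1 ++ u ≠ y := by
            intro h
            rw [← hsplit] at h
            exact hne (List.append_cancel_left h)
          have := hpre (y1 ++ u) hpy hney
          rw [alpha_append, beta_append, hstep] at this
          omega
      have hylen : y.length ≤ n := by simpa using hlen
      have hl1 : y1.length ≤ n := by rw [hy1len]; omega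
      have hl2 : y2.length ≤ n := by
        rw [hy2, List.length_drop]; omega
      obtain ⟨t1, ht1⟩ := ih y1 hl1 hAE1
      obtain ⟨t2, ht2⟩ := ih y2 hl2 hAE2
      exact ⟨Tr.pair t1 t2, by rw [code, ht1, ht2, hsplit]⟩

theorem stmt17 (x : List Letter) : AE x ↔ ∃! t : Tr, code t = x := by
  constructor
  · intro hx
    obtain ⟨t, ht⟩ := exists_code x.length x le_rfl hx
    exact ⟨t, ht, fun s hs => code_inj (hs.trans ht.symm)⟩
  · rintro ⟨t, rfl, -⟩
    exact AE_code t
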